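/- Let M be a deterministic, OCA-proof, well-reserved transaction fee mechanism with block size B whose rules are defined for bid vectors of every finite length. Then there exists r ≥ 0 such that for every bid vector b, the intended allocation allocates exactly the min(B, |{i : b_i ≥ r}|) highest bids among those of value at least r, and the total burnt amount equals r times the number of allocated bids. -/

import Mathlib

open MeasureTheory

/-- A transaction fee mechanism with block size `B` (possibly infinite), whose
allocation, payment and burning rules are defined for bid vectors of every finite length.
Bids are nonnegative reals; payments and burns are nonnegative. -/
structure TFM (B : ℕ∞) where
  alloc : ∀ n : ℕ, (Fin n → ℝ) → Fin n → Bool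
  pay : ∀ n : ℕ, (Fin n → ℝ) → Fin n → ℝ
  burn : ∀ n : ℕ, (Fin n → ℝ) → Fin n → ℝ
  pay_nonneg : ∀ n b i, 0 ≤ pay n b i
  burn_nonneg : ∀ n b i, 0 ≤ burn n b i
  alloc_card_le : ∀ n b,
    (((Finset.univ.filter fun i => alloc n b i = true).card : ℕ∞)) ≤ B

namespace TFM

variable {B : ℕ∞} (M : TFM B)

/-- Number of bids allocated by the intended allocation rule. -/
def allocCount (n : ℕ) (b : Fin n → ℝ) : ℕ :=
  (Finset.univ.filter fun i => M.alloc n b i = true).card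

/-- Miner utility when the real bids are `b`, the miner injects fake bids `f`,
and the mechanism's rules are applied to the full bid vector:
it collects all payments net of burn, but pays the fees of its own fake bids. -/
def minerUtil {n m : ℕ} (b : Fin n → ℝ) (f : Fin m → ℝ) : ℝ :=
  (∑ i : Fin (n + m),
      (M.pay (n + m) (Fin.append b f) i - M.burn (n + m) (Fin.append b f) i))
    - ∑ j : Fin m, M.pay (n + m) (Fin.append b f) (Fin.natAdd n j)

/-- Joint utility of the miner and the coalition `C` of (real) bidders with values `v`,
when the submitted real bids are `b`, the fake bids are `f`, and the miner chooses
the allocation `α` of the full bid vector. -/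
def jointUtil {n m : ℕ} (C : Finset (Fin n)) (b : Fin n → ℝ) (f : Fin m → ℝ)
    (α : Fin (n + m) → Bool) (v : Fin n → ℝ) : ℝ :=
  M.minerUtil b f
    + ∑ i ∈ C, (v i * (if α (Fin.castAdd m i) then 1 else 0)
        - M.pay (n + m) (Fin.append b f) (Fin.castAdd m i))

/-- Joint utility of the miner and the coalition `C` under truthful bidding,
no fake bids, and the intended allocation. -/
def truthfulJoint {n : ℕ} (C : Finset (Fin n)) (v : Fin n → ℝ) : ℝ :=
  (∑ i : Fin n, (M.pay n v i - M.burn n v i))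
    + ∑ i ∈ C, (v i * (if M.alloc n v i then 1 else 0) - M.pay n v i)

/-- The set of bidders allocated under truthful bidding and the intended allocation. -/
def winners (n : ℕ) (v : Fin n → ℝ) : Finset (Fin n) :=
  Finset.univ.filter fun i => M.alloc n v i = true

/-- OCA-proofness: no deviation (an arbitrary set `S` of deviating bidders, arbitrary
fake bids and an arbitrary feasible allocation chosen by the miner) gives the miner and
the deviating bidders a joint utility exceeding the joint utility of the miner together
with the bidders allocated under truthful bidding and the intended allocation. -/
def OCAProof : Prop :=
  ∀ (n : ℕ) (v : Fin n → ℝ), (∀ i, 0 ≤ v i) →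
  ∀ (S : Finset (Fin n)) (b : Fin n → ℝ), (∀ i, 0 ≤ b i) → (∀ i ∉ S, b i = v i) →
  ∀ (m : ℕ) (f : Fin m → ℝ), (∀ j, 0 ≤ f j) →
  ∀ α : Fin (n + m) → Bool,
    (((Finset.univ.filter fun i => α i = true).card : ℕ∞)) ≤ B →
    M.jointUtil S b f α v ≤ M.truthfulJoint (M.winners n v) v

end TFM

namespace TFM

variable {B : ℕ∞} (M : TFM B)

/-- Ex-post individual rationality: under the intended allocation, every unallocated
bidder pays `0`, and every allocated bidder pays at most its bid. -/
def EPIR : Prop :=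
  ∀ (n : ℕ) (b : Fin n → ℝ), (∀ i, 0 ≤ b i) → ∀ i : Fin n,
    (M.alloc n b i = false → M.pay n b i = 0) ∧
    (M.alloc n b i = true → M.pay n b i ≤ b i)

/-- Ex-post budget balance: the burn never exceeds the payment. -/
def EPBB : Prop :=
  ∀ (n : ℕ) (b : Fin n → ℝ), (∀ i, 0 ≤ b i) → ∀ i : Fin n, M.burn n b i ≤ M.pay n b i

/-- The mechanism is well-reserved with reserve price `r`: bids strictly below `r` are
never allocated, and no bid of at least `r` is unallocated while fewer than `B` bids are
allocated. -/
def WellReservedWith (r : ℝ) : Prop :=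
  ∀ (n : ℕ) (b : Fin n → ℝ), (∀ i, 0 ≤ b i) → ∀ i : Fin n,
    (b i < r → M.alloc n b i = false) ∧
    (r ≤ b i → M.alloc n b i = false → ¬ ((M.allocCount n b : ℕ∞) < B))

/-- A TFM is well-reserved if it is EPIR, EPBB and well-reserved with some reserve `r ≥ 0`. -/
def WellReserved : Prop :=
  M.EPIR ∧ M.EPBB ∧ ∃ r : ℝ, 0 ≤ r ∧ M.WellReservedWith r

end TFM

/-- Every deterministic OCA-proof well-reserved TFM with block size `B`
allocates, for some `r ≥ 0`, exactly the `min(B, |{i : bᵢ ≥ r}|)` highest bids among those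
of value at least `r`, and burns `r` for each allocated bid. -/

lemma TFM.key {B : ℕ∞} (M : TFM B) (hOCA : M.OCAProof) {n : ℕ} (v : Fin n → ℝ)
    (hv : ∀ i, 0 ≤ v i) (b : Fin n → ℝ) (hb : ∀ i, 0 ≤ b i) (α : Fin n → Bool)
    (hα : ((Finset.univ.filter fun i => α i = true).card : ℕ∞) ≤ B) :
    (∑ i : Fin n, (M.pay n b i - M.burn n b i))
      + ∑ i : Fin n, (v i * (if α i then 1 else 0) - M.pay n b i)
      ≤ M.truthfulJoint (M.winners n v) v := by
  have h := hOCA n v hv Finset.univ b hb (fun i hi => absurd (Finset.mem_univ i) hi)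
    0 Fin.elim0 (fun j => j.elim0) α hα
  have happ : Fin.append b Fin.elim0 = b := funext fun i => Fin.append_left b _ i
  simp only [TFM.jointUtil, TFM.minerUtil, happ] at h
  convert h using 2
  simp
  rfl
section Helpers

variable {B : ℕ∞} (M : TFM B)

lemma TFM.sum_ind {n : ℕ} (g : Fin n → ℝ) (p : Fin n → Bool) :
    ∑ k : Fin n, g k * (if p k then (1:ℝ) else 0)
      = ∑ k ∈ Finset.univ.filter (fun k => p k = true), g k := by
  rw [Finset.sum_filter]
  simp [mul_ite]

lemma TFM.pay_outside {n : ℕ} (hEPIR : M.EPIR) (b : Fin n → ℝ) (hb : ∀ i, 0 ≤ b i) :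
    ∑ k : Fin n, M.pay n b k = ∑ k ∈ M.winners n b, M.pay n b k := by
  refine (Finset.sum_subset (Finset.subset_univ _) fun x _ hx => ?_).symm
  have : M.alloc n b x = false := by
    simp only [TFM.winners, Finset.mem_filter, Finset.mem_univ, true_and] at hx
    simpa using hx
  exact (hEPIR n b hb x).1 this

lemma TFM.truthful_eq {n : ℕ} (hEPIR : M.EPIR) (b : Fin n → ℝ) (hb : ∀ i, 0 ≤ b i) :
    M.truthfulJoint (M.winners n b) b
      = (∑ k ∈ M.winners n b, b k) - ∑ k : Fin n, M.burn n b k := by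
  rw [TFM.truthfulJoint]
  have h1 : ∑ i ∈ M.winners n b, (b i * (if M.alloc n b i then 1 else 0) - M.pay n b i)
      = ∑ i ∈ M.winners n b, (b i - M.pay n b i) := by
    refine Finset.sum_congr rfl fun i hi => ?_
    simp only [TFM.winners, Finset.mem_filter] at hi
    rw [if_pos hi.2]; ring
  rw [h1, Finset.sum_sub_distrib, Finset.sum_sub_distrib, M.pay_outside hEPIR b hb]
  ring

end Helpers

theorem oca_proof_well_reserved_characterization (B : ℕ∞) (M : TFM B)
    (hOCA : M.OCAProof) (hWR : M.WellReserved) :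
    ∃ r : ℝ, 0 ≤ r ∧
      ∀ (n : ℕ) (b : Fin n → ℝ), (∀ i, 0 ≤ b i) →
        (∀ i : Fin n, M.alloc n b i = true → r ≤ b i) ∧
        ((M.allocCount n b : ℕ∞)
          = min B (((Finset.univ.filter fun i : Fin n => r ≤ b i).card : ℕ∞))) ∧
        (∀ i j : Fin n, M.alloc n b i = true → M.alloc n b j = false → b j ≤ b i) ∧
        (∑ i : Fin n, M.burn n b i) = r * (M.allocCount n b : ℝ) := by
  obtain ⟨hEPIR, hEPBB, r, hr, hres⟩ := hWR
  refine ⟨r, hr, fun n b hb => ?_⟩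
  set W := M.winners n b with hW
  have hWmem : ∀ i, i ∈ W ↔ M.alloc n b i = true := by
    intro i; simp [hW, TFM.winners]
  have h1 : ∀ i : Fin n, M.alloc n b i = true → r ≤ b i := by
    intro i hi
    by_contra h
    push_neg at h
    have := (hres n b hb i).1 h
    rw [hi] at this; exact Bool.noConfusion this
  refine ⟨h1, ?_, ?_, ?_⟩
  · -- cardinality
    set R := Finset.univ.filter (fun i : Fin n => r ≤ b i) with hR
    have hAR : W ⊆ R := by
      intro i hi
      rw [hWmem] at hi
      simp only [hR, Finset.mem_filter, Finset.mem_univ, true_and]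
      exact h1 i hi
    have hcW : M.allocCount n b = W.card := rfl
    by_cases hc : (M.allocCount n b : ℕ∞) < B
    · have hRA : R ⊆ W := by
        intro i hi
        simp only [hR, Finset.mem_filter, Finset.mem_univ, true_and] at hi
        by_contra hia
        rw [hWmem] at hia
        exact (hres n b hb i).2 hi (by simpa using hia) hc
      have hARR : W = R := Finset.Subset.antisymm hAR hRA
      rw [hcW, hARR, min_eq_right]
      rw [hcW, hARR] at hc
      exact hc.le
    · have hcb : (M.allocCount n b : ℕ∞) = B := le_antisymm (M.alloc_card_le n b) (not_lt.mp hc)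
      rw [hcb, min_eq_left]
      rw [← hcb]
      exact_mod_cast Finset.card_le_card hAR
  · -- highest bids
    intro i j hi hj
    have hij : i ≠ j := by rintro rfl; rw [hi] at hj; exact Bool.noConfusion hj
    set α : Fin n → Bool := fun k => if k = j then true else if k = i then false
      else M.alloc n b k with hα
    have hiW : i ∈ W := (hWmem i).mpr hi
    have hjW : j ∉ W := by rw [hWmem, hj]; simp
    have hF : Finset.univ.filter (fun k => α k = true) = insert j (W.erase i) := by
      ext k
      simp only [Finset.mem_filter, Finset.mem_univ, true_and, Finset.mem_insert,
        Finset.mem_erase, hα, hWmem]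
      split_ifs with h h' <;> simp_all
    have hfeas : ((Finset.univ.filter fun k => α k = true).card : ℕ∞) ≤ B := by
      have : (Finset.univ.filter fun k => α k = true).card = W.card := by
        rw [hF, Finset.card_insert_of_notMem (fun h => hjW (Finset.mem_of_mem_erase h)),
          Finset.card_erase_of_mem hiW]
        have : 0 < W.card := Finset.card_pos.mpr ⟨i, hiW⟩
        omega
      rw [this]
      exact M.alloc_card_le n b
    have h := M.key hOCA b hb b hb α hfeas
    rw [M.truthful_eq hEPIR b hb] at h
    rw [Finset.sum_sub_distrib, Finset.sum_sub_distrib, TFM.sum_ind,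
      M.pay_outside hEPIR b hb, hF, Finset.sum_insert
        (fun h => hjW (Finset.mem_of_mem_erase h)),
      Finset.sum_erase_eq_sub hiW] at h
    have := M.pay_outside hEPIR b hb
    linarith
  · -- burn = r * count
    set S := ∑ k : Fin n, M.burn n b k with hS
    set c := M.allocCount n b with hc
    have hSnn : 0 ≤ S := Finset.sum_nonneg fun k _ => M.burn_nonneg n b k
    have hsumW : ∀ g : Fin n → ℝ,
        ∑ k : Fin n, g k * (if M.alloc n b k then (1:ℝ) else 0) = ∑ k ∈ W, g k :=
      fun g => TFM.sum_ind g _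
    -- upper bound
    have hupper : S ≤ r * c := by
      set b' : Fin n → ℝ := fun k => if M.alloc n b k then r else 0 with hb'
      have hb'nn : ∀ k, 0 ≤ b' k := by
        intro k; simp only [hb']; split <;> simp [hr]
      have h := M.key hOCA b hb b' hb'nn (fun k => M.alloc n b k) (M.alloc_card_le n b)
      rw [M.truthful_eq hEPIR b hb] at h
      rw [Finset.sum_sub_distrib, Finset.sum_sub_distrib, hsumW,
        ] at h
      have hb'burn : ∑ k : Fin n, M.burn n b' k ≤ r * c := by
        have hpt : ∀ k, M.burn n b' k ≤ b' k := by
          intro k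
          cases hk : M.alloc n b' k with
          | false =>
            have := (hEPIR n b' hb'nn k).1 hk
            have h2 := hEPBB n b' hb'nn k
            rw [this] at h2
            exact h2.trans (hb'nn k)
          | true =>
            exact (hEPBB n b' hb'nn k).trans ((hEPIR n b' hb'nn k).2 hk)
        calc ∑ k : Fin n, M.burn n b' k ≤ ∑ k : Fin n, b' k :=
              Finset.sum_le_sum fun k _ => hpt k
          _ = r * c := by
              simp only [hb']
              rw [Finset.sum_ite, Finset.sum_const, Finset.sum_const_zero, add_zero,
                nsmul_eq_mul, mul_comm]
              rfl
      linarith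
    -- lower bound
    have hlower : r * c ≤ S := by
      by_contra hcon
      push_neg at hcon
      have hcpos : 0 < (c : ℝ) := by
        rcases Nat.eq_zero_or_pos c with h0 | h0
        · rw [h0] at hcon; simp at hcon; linarith
        · exact_mod_cast h0
      have hrS : S / c < r := by
        rw [div_lt_iff₀ hcpos]; linarith [mul_comm r (c:ℝ)]
      obtain ⟨t, ht1, ht2⟩ := exists_between hrS
      have htnn : 0 ≤ t := le_trans (div_nonneg hSnn hcpos.le) ht1.le
      -- key with valuation v* = t on winners, 0 elsewhere, bids b, alloc = intended
      set v : Fin n → ℝ := fun k => if M.alloc n b k then t else 0 with hv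
      have hvnn : ∀ k, 0 ≤ v k := by
        intro k; simp only [hv]; split <;> simp [htnn]
      have hvlt : ∀ k, v k < r := by
        intro k; simp only [hv]; split
        · exact ht2
        · exact lt_of_le_of_lt htnn ht2
      have hvalloc : ∀ k, M.alloc n v k = false := fun k => (hres n v hvnn k).1 (hvlt k)
      have hvwin : M.winners n v = ∅ := by
        ext k; simp [TFM.winners, hvalloc k]
      have hvpay : ∀ k, M.pay n v k = 0 := fun k => (hEPIR n v hvnn k).1 (hvalloc k)
      have hvburn : ∀ k, M.burn n v k = 0 := by
        intro k
        have h2 := hEPBB n v hvnn k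
        rw [hvpay k] at h2
        exact le_antisymm h2 (M.burn_nonneg n v k)
      have htruth : M.truthfulJoint (M.winners n v) v = 0 := by
        rw [hvwin, TFM.truthfulJoint]
        simp [hvpay, hvburn]
      have h := M.key hOCA v hvnn b hb (fun k => M.alloc n b k) (M.alloc_card_le n b)
      rw [htruth] at h
      rw [Finset.sum_sub_distrib, Finset.sum_sub_distrib, hsumW] at h
      have hsumv : ∑ k ∈ W, v k = t * c := by
        have : ∀ k ∈ W, v k = t := by
          intro k hk; rw [hWmem] at hk; simp [hv, hk]
        rw [Finset.sum_congr rfl this, Finset.sum_const, nsmul_eq_mul, mul_comm]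
        rfl
      rw [hsumv] at h
      have htc : S < t * c := by
        rw [div_lt_iff₀ hcpos] at ht1
        linarith
      linarith
    linarith
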